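/- Let μ > 1, 0 < α < 1 and c > 0 be real numbers, and let r : ℕ → ℝ be nonnegative with r(0) = 0 and r(n)·n^μ·α^n → c as n → ∞. Then ρ := ∑_{n≥1} r(n)·α^n converges; set τ := ρ/(1−α) and assume τ < 1 (note τ > 0 since c > 0). For n, j ∈ ℕ let δ(n,j) be the coefficient of z^n in R(z)^j·(1−z)^{−(j+1)}, where R(z) = ∑_n r(n)z^n ∈ ℝ[[z]], and let δ(n) := ∑_{j≥0} δ(n,j) (a finite sum, since δ(n,j) = 0 for j > n). Then for every integer i ≥ 1, lim_{n→∞} δ(n,i)/δ(n) = ((1−τ)²/τ)·i·τ^i. -/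

import Mathlib

open Filter Finset

namespace Stmt1Aux

noncomputable section

/-- convolution of two sequences -/
def conv (a b : ℕ → ℝ) (n : ℕ) : ℝ := ∑ p ∈ Finset.HasAntidiagonal.antidiagonal n, a p.1 * b p.2

lemma conv_eq_range (a b : ℕ → ℝ) (n : ℕ) :
    conv a b n = ∑ k ∈ range (n + 1), a k * b (n - k) :=
  Finset.Nat.sum_antidiagonal_eq_sum_range_succ_mk _ n

lemma conv_nonneg {a b : ℕ → ℝ} (ha : ∀ n, 0 ≤ a n) (hb : ∀ n, 0 ≤ b n) (n : ℕ) :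
    0 ≤ conv a b n :=
  Finset.sum_nonneg fun p _ => mul_nonneg (ha _) (hb _)

lemma summable_conv {a b : ℕ → ℝ} (ha : ∀ n, 0 ≤ a n) (hb : ∀ n, 0 ≤ b n)
    (hsa : Summable a) (hsb : Summable b) : Summable (conv a b) := by
  have hna : Summable fun n => ‖a n‖ := hsa.congr fun n => (Real.norm_of_nonneg (ha n)).symm
  have hnb : Summable fun n => ‖b n‖ := hsb.congr fun n => (Real.norm_of_nonneg (hb n)).symm
  exact (summable_norm_sum_mul_antidiagonal_of_summable_norm hna hnb).of_norm

lemma tsum_conv {a b : ℕ → ℝ} (ha : ∀ n, 0 ≤ a n) (hb : ∀ n, 0 ≤ b n)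
    (hsa : Summable a) (hsb : Summable b) :
    ∑' n, conv a b n = (∑' n, a n) * (∑' n, b n) := by
  have hna : Summable fun n => ‖a n‖ := hsa.congr fun n => (Real.norm_of_nonneg (ha n)).symm
  have hnb : Summable fun n => ‖b n‖ := hsb.congr fun n => (Real.norm_of_nonneg (hb n)).symm
  exact (tsum_mul_tsum_eq_tsum_sum_antidiagonal_of_summable_norm hna hnb).symm

/-- the weight `(n+1)^μ` -/
def W (μ : ℝ) (n : ℕ) : ℝ := ((n : ℝ) + 1) ^ μ

lemma W_pos (μ : ℝ) (n : ℕ) : 0 < W μ n :=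
  Real.rpow_pos_of_pos (by positivity) _

/-- transfer a limit statement from weight `n^μ` to weight `(n+1)^μ` -/
lemma tendsto_W_of_tendsto {μ : ℝ} (hμ : 0 < μ) {b : ℕ → ℝ} {B : ℝ}
    (h : Tendsto (fun n : ℕ => (n : ℝ) ^ μ * b n) atTop (nhds B)) :
    Tendsto (fun n : ℕ => W μ n * b n) atTop (nhds B) := by
  have h1 : Tendsto (fun n : ℕ => ((n : ℝ) + 1) / (n : ℝ)) atTop (nhds 1) := by
    have hb : Tendsto (fun n : ℕ => 1 + 1 / (n:ℝ)) atTop (nhds (1 + 0)) :=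
      (tendsto_const_nhds (x := (1:ℝ))).add tendsto_one_div_atTop_nhds_zero_nat
    rw [add_zero] at hb
    refine hb.congr' ?_
    filter_upwards [eventually_ge_atTop 1] with n hn
    have : (n : ℝ) ≠ 0 := by
      have : (0:ℕ) < n := hn
      positivity
    field_simp
  have h2 : Tendsto (fun n : ℕ => (((n : ℝ) + 1) / (n : ℝ)) ^ μ) atTop (nhds 1) := by
    have := h1.rpow_const (p := μ) (Or.inl one_ne_zero)
    simpa using this
  have h3 := h2.mul h
  rw [one_mul] at h3
  refine h3.congr' ?_
  filter_upwards [eventually_ge_atTop 1] with n hn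
  have hn0 : (0:ℝ) < (n : ℝ) := by exact_mod_cast hn
  rw [Real.div_rpow (by positivity) hn0.le]
  rw [W]
  field_simp

lemma W_le_two_rpow_W {μ : ℝ} (hμ : 0 ≤ μ) {k n : ℕ} (h : 2 * k ≤ n + 1) :
    W μ n ≤ 2 ^ μ * W μ (n - k) := by
  have hn : n + 1 ≤ 2 * (n - k) + 2 := by omega
  have hc : ((n : ℝ) + 1) ≤ 2 * (((n - k : ℕ) : ℝ) + 1) := by exact_mod_cast hn
  calc W μ n = ((n : ℝ) + 1) ^ μ := rfl
    _ ≤ (2 * (((n - k : ℕ) : ℝ) + 1)) ^ μ :=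
        Real.rpow_le_rpow (by positivity) hc hμ
    _ = 2 ^ μ * W μ (n - k) := Real.mul_rpow (by norm_num) (by positivity)

lemma tendsto_piece {μ : ℝ} (hμ : 0 ≤ μ) {a b : ℕ → ℝ} {B Nb : ℝ} (s : ℕ)
    (ha0 : ∀ n, 0 ≤ a n) (hb0 : ∀ n, 0 ≤ b n) (hsa : Summable a)
    (hNb : ∀ m, W μ m * b m ≤ Nb)
    (hB : Tendsto (fun n => W μ n * b n) atTop (nhds B)) :
    Tendsto (fun n => ∑' k, if 2 * k + s ≤ n then W μ n * (a k * b (n - k)) else 0)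
      atTop (nhds ((∑' k, a k) * B)) := by
  have hNb0 : 0 ≤ Nb := le_trans (mul_nonneg (W_pos μ 0).le (hb0 0)) (hNb 0)
  have key := tendsto_tsum_of_dominated_convergence (𝓕 := (atTop : Filter ℕ))
    (f := fun (n k : ℕ) => if 2 * k + s ≤ n then W μ n * (a k * b (n - k)) else 0)
    (g := fun k => a k * B) (bound := fun k => 2 ^ μ * Nb * a k)
    ((hsa.mul_left _)) ?_ ?_
  · have : ∑' k, a k * B = (∑' k, a k) * B := by
      rw [tsum_mul_right]
    rwa [this] at key
  · -- pointwise limits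
    intro k
    have hsub := tendsto_sub_atTop_nat k
    have T1 : Tendsto (fun n => W μ (n - k) * b (n - k)) atTop (nhds B) := hB.comp hsub
    have hbase0 : Tendsto (fun m : ℕ => (k : ℝ) / ((m : ℝ) + 1)) atTop (nhds 0) := by
      apply Tendsto.div_atTop (tendsto_const_nhds)
      exact tendsto_atTop_add_const_right _ 1 tendsto_natCast_atTop_atTop
    have hbase : Tendsto (fun n : ℕ => 1 + (k : ℝ) / (((n - k : ℕ) : ℝ) + 1)) atTop
        (nhds 1) := by
      have := (tendsto_const_nhds (x := (1:ℝ))).add (hbase0.comp hsub)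
      rw [add_zero] at this
      exact this
    have T2 : Tendsto (fun n : ℕ => W μ n / W μ (n - k)) atTop (nhds 1) := by
      have h2 := hbase.rpow_const (p := μ) (Or.inr hμ)
      rw [Real.one_rpow] at h2
      refine h2.congr' ?_
      filter_upwards [eventually_ge_atTop k] with n hn
      have hm : ((n : ℝ)) = ((n - k : ℕ) : ℝ) + (k : ℝ) := by
        have : n - k + k = n := Nat.sub_add_cancel hn
        exact_mod_cast (congrArg (fun x : ℕ => (x : ℝ)) this).symm
      have hden : (0:ℝ) < ((n - k : ℕ) : ℝ) + 1 := by positivity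
      rw [W, W, ← Real.div_rpow (by positivity) hden.le]
      have heq : ((n:ℝ) + 1) = ((((n - k : ℕ) : ℝ)) + 1) + k := by rw [hm]; ring
      congr 1
      rw [heq, add_div, div_self hden.ne']
    have T3 := (T2.mul T1).const_mul (a k)
    rw [one_mul] at T3
    refine T3.congr' ?_
    filter_upwards [eventually_ge_atTop (2 * k + s)] with n hn
    have hW : W μ (n - k) ≠ 0 := (W_pos μ (n - k)).ne'
    rw [if_pos hn]
    field_simp
  · -- domination
    refine Eventually.of_forall fun n => fun k => ?_
    by_cases h : 2 * k + s ≤ n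
    · rw [if_pos h]
      have h1 : W μ n ≤ 2 ^ μ * W μ (n - k) := W_le_two_rpow_W hμ (by omega)
      have h2 : W μ (n - k) * b (n - k) ≤ Nb := hNb _
      have hb' := hb0 (n - k)
      have ha' := ha0 k
      have hWp := (W_pos μ (n - k)).le
      have h2p : (0:ℝ) ≤ 2 ^ μ := Real.rpow_nonneg (by norm_num) _
      rw [Real.norm_of_nonneg (mul_nonneg (W_pos μ n).le (mul_nonneg ha' hb'))]
      nlinarith [mul_le_mul_of_nonneg_right h1 (mul_nonneg ha' hb'),
        mul_le_mul_of_nonneg_left h2 (mul_nonneg h2p ha')]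
    · rw [if_neg h]
      have h2p : (0:ℝ) ≤ 2 ^ μ := Real.rpow_nonneg (by norm_num) _
      simpa using mul_nonneg (mul_nonneg h2p hNb0) (ha0 k)

lemma tendsto_W_conv {μ : ℝ} (hμ : 0 ≤ μ) {a b : ℕ → ℝ} {A B : ℝ}
    (ha0 : ∀ n, 0 ≤ a n) (hb0 : ∀ n, 0 ≤ b n) (hsa : Summable a) (hsb : Summable b)
    (hA : Tendsto (fun n => W μ n * a n) atTop (nhds A))
    (hB : Tendsto (fun n => W μ n * b n) atTop (nhds B)) :
    Tendsto (fun n => W μ n * conv a b n) atTop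
      (nhds ((∑' n, a n) * B + (∑' n, b n) * A)) := by
  obtain ⟨Na, hNa'⟩ := hA.bddAbove_range
  have hNa : ∀ n, W μ n * a n ≤ Na := fun n => hNa' (Set.mem_range_self n)
  obtain ⟨Nb, hNb'⟩ := hB.bddAbove_range
  have hNb : ∀ n, W μ n * b n ≤ Nb := fun n => hNb' (Set.mem_range_self n)
  have P1 := tendsto_piece hμ 0 ha0 hb0 hsa hNb hB
  have P2 := tendsto_piece hμ 1 hb0 ha0 hsb hNa hA
  have Psum := P1.add P2
  refine Psum.congr fun n => ?_
  have hfin1 : (∑' k, if 2 * k + 0 ≤ n then W μ n * (a k * b (n - k)) else 0)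
      = ∑ k ∈ range (n + 1), (if 2 * k + 0 ≤ n then W μ n * (a k * b (n - k)) else 0) := by
    refine tsum_eq_sum fun k hk => ?_
    rw [if_neg]
    simp only [Finset.mem_range] at hk
    omega
  have hfin2 : (∑' k, if 2 * k + 1 ≤ n then W μ n * (b k * a (n - k)) else 0)
      = ∑ k ∈ range (n + 1), (if 2 * k + 1 ≤ n then W μ n * (b k * a (n - k)) else 0) := by
    refine tsum_eq_sum fun k hk => ?_
    rw [if_neg]
    simp only [Finset.mem_range] at hk
    omega
  have hrefl : ∑ k ∈ range (n + 1), (if 2 * k + 1 ≤ n then W μ n * (b k * a (n - k)) else 0)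
      = ∑ k ∈ range (n + 1),
        (if 2 * (n - k) + 1 ≤ n then W μ n * (b (n - k) * a (n - (n - k))) else 0) := by
    rw [← Finset.sum_range_reflect]
    simp only [Nat.succ_sub_succ_eq_sub]
    rfl
  rw [hfin1, hfin2, hrefl, ← Finset.sum_add_distrib, conv_eq_range, Finset.mul_sum]
  refine Finset.sum_congr rfl fun k hk => ?_
  simp only [Finset.mem_range] at hk
  have hkn : k ≤ n := by omega
  have hnk : n - (n - k) = k := by omega
  rw [hnk]
  by_cases h : 2 * k ≤ n
  · rw [if_pos (by omega), if_neg (by omega)]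
    ring
  · rw [if_neg (by omega), if_pos (by omega)]
    ring

/-- quantitative bound on weighted convolutions -/
lemma conv_W_bound {μ : ℝ} (hμ : 0 ≤ μ) {ε : ℝ} (hε0 : 0 < ε) (hε1 : ε < 1)
    {a b : ℕ → ℝ} {Na Nb Sb : ℝ}
    (ha0 : ∀ n, 0 ≤ a n) (hb0 : ∀ n, 0 ≤ b n) (hsa : Summable a) (hsb : Summable b)
    (hNa : ∀ n, W μ n * a n ≤ Na) (hNb : ∀ n, W μ n * b n ≤ Nb)
    (hSb : ∑' n, b n ≤ Sb) (n : ℕ) :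
    W μ n * conv a b n ≤
      ((1 - ε)⁻¹) ^ μ * ((∑' m, a m) * Nb) + (ε⁻¹) ^ μ * (Na * Sb) := by
  have hNa0 : 0 ≤ Na := le_trans (mul_nonneg (W_pos μ 0).le (ha0 0)) (hNa 0)
  have hNb0 : 0 ≤ Nb := le_trans (mul_nonneg (W_pos μ 0).le (hb0 0)) (hNb 0)
  have hε1' : (0:ℝ) ≤ (1 - ε)⁻¹ := inv_nonneg.2 (by linarith)
  have c1 : (0:ℝ) ≤ ((1 - ε)⁻¹) ^ μ := Real.rpow_nonneg hε1' _
  have c2 : (0:ℝ) ≤ (ε⁻¹) ^ μ := Real.rpow_nonneg (by positivity) _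
  have key : ∀ k ∈ range (n + 1), W μ n * (a k * b (n - k)) ≤
      ((1 - ε)⁻¹) ^ μ * (Nb * a k) + (ε⁻¹) ^ μ * (Na * b (n - k)) := by
    intro k hk
    simp only [Finset.mem_range] at hk
    have hkn : k ≤ n := by omega
    set x : ℝ := (n : ℝ) + 1 with hx
    set y : ℝ := ((n - k : ℕ) : ℝ) + 1 with hy
    set z : ℝ := (k : ℝ) + 1 with hz
    have hx0 : 0 < x := by positivity
    have hy0 : 0 < y := by positivity
    have hz0 : 0 < z := by positivity
    have hxyz : x + 1 = y + z := by
      have : (n - k) + k = n := Nat.sub_add_cancel hkn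
      have hcast : ((n - k : ℕ) : ℝ) + (k : ℝ) = (n : ℝ) := by exact_mod_cast this
      rw [hx, hy, hz]; linarith
    by_cases hc : (1 - ε) * x ≤ y
    · have hxle : x ≤ (1 - ε)⁻¹ * y := by
        rw [inv_mul_eq_div, le_div_iff₀ (by linarith)]
        linarith
      have hWle : W μ n ≤ ((1 - ε)⁻¹) ^ μ * W μ (n - k) := by
        calc W μ n = x ^ μ := rfl
          _ ≤ ((1 - ε)⁻¹ * y) ^ μ := Real.rpow_le_rpow hx0.le hxle hμ
          _ = ((1 - ε)⁻¹) ^ μ * y ^ μ := Real.mul_rpow hε1' hy0.le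
      calc W μ n * (a k * b (n - k))
          ≤ (((1 - ε)⁻¹) ^ μ * W μ (n - k)) * (a k * b (n - k)) :=
            mul_le_mul_of_nonneg_right hWle (mul_nonneg (ha0 k) (hb0 (n - k)))
        _ = (((1 - ε)⁻¹) ^ μ * a k) * (W μ (n - k) * b (n - k)) := by ring
        _ ≤ (((1 - ε)⁻¹) ^ μ * a k) * Nb :=
            mul_le_mul_of_nonneg_left (hNb _) (mul_nonneg c1 (ha0 k))
        _ = ((1 - ε)⁻¹) ^ μ * (Nb * a k) := by ring
        _ ≤ _ := le_add_of_nonneg_right (mul_nonneg c2 (mul_nonneg hNa0 (hb0 _)))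
    · push_neg at hc
      have hxle : x ≤ ε⁻¹ * z := by
        rw [inv_mul_eq_div, le_div_iff₀ hε0]
        linarith
      have hWle : W μ n ≤ (ε⁻¹) ^ μ * W μ k := by
        calc W μ n = x ^ μ := rfl
          _ ≤ (ε⁻¹ * z) ^ μ := Real.rpow_le_rpow hx0.le hxle hμ
          _ = (ε⁻¹) ^ μ * z ^ μ := Real.mul_rpow (by positivity) hz0.le
      calc W μ n * (a k * b (n - k))
          ≤ ((ε⁻¹) ^ μ * W μ k) * (a k * b (n - k)) :=
            mul_le_mul_of_nonneg_right hWle (mul_nonneg (ha0 k) (hb0 (n - k)))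
        _ = ((ε⁻¹) ^ μ * b (n - k)) * (W μ k * a k) := by ring
        _ ≤ ((ε⁻¹) ^ μ * b (n - k)) * Na :=
            mul_le_mul_of_nonneg_left (hNa _) (mul_nonneg c2 (hb0 _))
        _ = (ε⁻¹) ^ μ * (Na * b (n - k)) := by ring
        _ ≤ _ := le_add_of_nonneg_left (mul_nonneg c1 (mul_nonneg hNb0 (ha0 _)))
  have hsum_a : ∑ k ∈ range (n + 1), a k ≤ ∑' m, a m :=
    Summable.sum_le_tsum _ (fun k _ => ha0 k) hsa
  have hsum_b : ∑ k ∈ range (n + 1), b (n - k) ≤ Sb := by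
    have : ∑ k ∈ range (n + 1), b (n - k) = ∑ k ∈ range (n + 1), b k := by
      rw [← Finset.sum_range_reflect]
      refine Finset.sum_congr rfl fun x hx => ?_
      simp only [Finset.mem_range] at hx
      congr 1
      omega
    rw [this]
    exact le_trans (Summable.sum_le_tsum _ (fun k _ => hb0 k) hsb) hSb
  calc W μ n * conv a b n = ∑ k ∈ range (n + 1), W μ n * (a k * b (n - k)) := by
        rw [conv_eq_range, Finset.mul_sum]
    _ ≤ ∑ k ∈ range (n + 1),
        (((1 - ε)⁻¹) ^ μ * (Nb * a k) + (ε⁻¹) ^ μ * (Na * b (n - k))) :=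
        Finset.sum_le_sum key
    _ = ((1 - ε)⁻¹) ^ μ * (Nb * ∑ k ∈ range (n + 1), a k)
        + (ε⁻¹) ^ μ * (Na * ∑ k ∈ range (n + 1), b (n - k)) := by
        rw [Finset.sum_add_distrib, ← Finset.mul_sum, ← Finset.mul_sum,
          ← Finset.mul_sum, ← Finset.mul_sum]
    _ ≤ _ := by
        refine add_le_add (mul_le_mul_of_nonneg_left ?_ c1) (mul_le_mul_of_nonneg_left ?_ c2)
        · rw [mul_comm (∑' m, a m) Nb]
          exact mul_le_mul_of_nonneg_left hsum_a hNb0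
        · exact mul_le_mul_of_nonneg_left hsum_b hNa0

/-- `(n+1)^μ * α^n → 0` -/
lemma tendsto_W_geom {μ : ℝ} (hμ : 0 ≤ μ) {α : ℝ} (hα0 : 0 ≤ α) (hα1 : α < 1) :
    Tendsto (fun n : ℕ => W μ n * α ^ n) atTop (nhds 0) := by
  rcases eq_or_lt_of_le hα0 with h0 | hαpos
  · refine Filter.Tendsto.congr' ?_ (tendsto_const_nhds (x := (0:ℝ)))
    filter_upwards [eventually_ge_atTop 1] with n hn
    rw [← h0, zero_pow (by omega), mul_zero]
  set m : ℕ := ⌈μ⌉₊ with hm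
  have hpoly : Tendsto (fun n : ℕ => ((n : ℝ) + 1) ^ m * α ^ n) atTop (nhds 0) := by
    have h1 := tendsto_pow_const_mul_const_pow_of_lt_one m hα0 hα1
    have h2 := (h1.comp (tendsto_add_atTop_nat 1)).const_mul α⁻¹
    rw [mul_zero] at h2
    refine h2.congr fun n => ?_
    simp only [Function.comp_apply]
    push_cast
    rw [pow_succ]
    have : α ^ n * α * α⁻¹ = α ^ n := by
      field_simp
    rw [mul_comm (α⁻¹), mul_assoc, this]
  have hub : ∀ n : ℕ, W μ n * α ^ n ≤ ((n : ℝ) + 1) ^ m * α ^ n := by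
    intro n
    refine mul_le_mul_of_nonneg_right ?_ (pow_nonneg hα0 n)
    have h1 : ((n : ℝ) + 1) ^ μ ≤ ((n : ℝ) + 1) ^ (m : ℝ) :=
      Real.rpow_le_rpow_of_exponent_le (by simp) (Nat.le_ceil μ)
    rw [Real.rpow_natCast] at h1
    exact h1
  have hlb : ∀ n : ℕ, 0 ≤ W μ n * α ^ n := fun n =>
    mul_nonneg (W_pos μ n).le (pow_nonneg hα0 n)
  exact squeeze_zero hlb hub hpoly

/-- summability from a `(n+1)^μ` bound, `μ > 1` -/
lemma summable_of_W_bound {μ : ℝ} (hμ : 1 < μ) {b : ℕ → ℝ} {C : ℝ}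
    (hb0 : ∀ n, 0 ≤ b n) (hC : ∀ n, W μ n * b n ≤ C) : Summable b := by
  have hs : Summable (fun n : ℕ => (((n : ℝ) + 1) ^ μ)⁻¹) := by
    have h1 : Summable (fun n : ℕ => (((n : ℝ)) ^ μ)⁻¹) :=
      Real.summable_nat_rpow_inv.2 hμ
    have h2 := (summable_nat_add_iff 1).2 h1
    refine h2.congr fun n => ?_
    push_cast
    ring_nf
  refine Summable.of_nonneg_of_le hb0 (fun n => ?_) (hs.mul_left C)
  have hW := W_pos μ n
  calc b n ≤ C / W μ n := by
        rw [le_div_iff₀ hW, mul_comm]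
        exact hC n
    _ = C * (((n : ℝ) + 1) ^ μ)⁻¹ := by rw [div_eq_mul_inv]; rfl

end

end Stmt1Aux

open Filter

/- Theorem 1 (discrete limit law for the number of irreducible substructures).
`r n` models the number of irreducible structures of length `n`,
`δ n j = [z^n] R(z)^j (1-z)^{-(j+1)}` the number of structures of length `n`
with exactly `j` irreducible substructures (which vanishes for `j > n` since
`r 0 = 0`), and `δtot n = ∑_{j≥0} δ n j = ∑_{j=0}^{n} δ n j`. -/
theorem stmt_1 (μ α c : ℝ) (hμ : 1 < μ) (hα0 : 0 < α) (hα1 : α < 1) (hc : 0 < c)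
    (r : ℕ → ℝ) (hr0 : r 0 = 0) (hrpos : ∀ n, 0 ≤ r n)
    (hasym : Tendsto (fun n : ℕ => r n * (n : ℝ) ^ μ * α ^ n) atTop (nhds c))
    (ρ τ : ℝ) (hρ : ρ = ∑' n : ℕ, r n * α ^ n) (hτ : τ = ρ / (1 - α)) (hτ1 : τ < 1)
    (δ : ℕ → ℕ → ℝ)
    (hδ : ∀ n j, δ n j = PowerSeries.coeff (R := ℝ) n
      ((PowerSeries.mk r) ^ j * ((1 - PowerSeries.X)⁻¹) ^ (j + 1)))
    (δtot : ℕ → ℝ) (hδtot : ∀ n, δtot n = ∑ j ∈ Finset.range (n + 1), δ n j) :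
    Summable (fun n : ℕ => r n * α ^ n) ∧
      ∀ i : ℕ, 1 ≤ i →
        Tendsto (fun n => δ n i / δtot n) atTop
          (nhds ((1 - τ) ^ 2 / τ * i * τ ^ i)) := by
  classical
  have hμ0 : (0:ℝ) ≤ μ := by linarith
  have hμpos : (0:ℝ) < μ := by linarith
  have h1α : (0:ℝ) < 1 - α := by linarith
  set W : ℕ → ℝ := Stmt1Aux.W μ with hW_def
  have hWpos : ∀ n, 0 < W n := Stmt1Aux.W_pos μ
  set a : ℕ → ℝ := fun n => r n * α ^ n with ha_def
  have ha0 : ∀ n, 0 ≤ a n := fun n => mul_nonneg (hrpos n) (pow_nonneg hα0.le n)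
  have hA : Tendsto (fun n => W n * a n) atTop (nhds c) := by
    apply Stmt1Aux.tendsto_W_of_tendsto hμpos
    refine hasym.congr fun n => ?_
    simp only [ha_def]
    ring
  obtain ⟨Ca, hCa'⟩ := hA.bddAbove_range
  have hCa : ∀ n, W n * a n ≤ Ca := fun n => hCa' (Set.mem_range_self n)
  have hsa : Summable a := Stmt1Aux.summable_of_W_bound hμ ha0 hCa
  -- conclusion 1
  refine ⟨hsa, ?_⟩
  -- positivity of ρ and τ
  have hρsum : ∑' n, a n = ρ := hρ.symm
  have hρpos : 0 < ρ := by
    obtain ⟨n0, hn0⟩ := (hA.eventually_const_lt (by linarith : c / 2 < c)).exists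
    have han0 : 0 < a n0 := by
      by_contra h
      push_neg at h
      have : a n0 = 0 := le_antisymm h (ha0 n0)
      rw [this, mul_zero] at hn0
      linarith
    rw [← hρsum]
    exact Summable.tsum_pos hsa ha0 n0 han0
  have hτ0 : 0 < τ := by rw [hτ]; exact div_pos hρpos h1α
  -- geometric sequence
  set g0 : ℕ → ℝ := fun n => α ^ n with hg0_def
  have hg00 : ∀ n, 0 ≤ g0 n := fun n => pow_nonneg hα0.le n
  have hsg0 : Summable g0 := summable_geometric_of_lt_one hα0.le hα1
  have htg0 : ∑' n, g0 n = (1 - α)⁻¹ := tsum_geometric_of_lt_one hα0.le hα1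
  have hG0 : Tendsto (fun n => W n * g0 n) atTop (nhds 0) :=
    Stmt1Aux.tendsto_W_geom hμ0 hα0.le hα1
  -- power series facts
  have hinv : ((1 - PowerSeries.X : PowerSeries ℝ)⁻¹) = PowerSeries.mk fun _ => (1:ℝ) := by
    rw [PowerSeries.inv_eq_iff_mul_eq_one]
    · ext n
      rw [mul_sub, mul_one, map_sub]
      cases n with
      | zero => simp [PowerSeries.coeff_zero_mul_X, PowerSeries.coeff_mk]
      | succ k =>
        rw [PowerSeries.coeff_succ_mul_X]
        simp [PowerSeries.coeff_mk, PowerSeries.coeff_one]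
    · simp
  set hs : ℕ → ℝ := fun k =>
    PowerSeries.coeff (R := ℝ) k (PowerSeries.mk r * PowerSeries.mk fun _ => (1:ℝ)) with hhs_def
  have hδ0 : ∀ n, δ n 0 = 1 := by
    intro n
    rw [hδ, pow_zero, one_mul, pow_one, hinv, PowerSeries.coeff_mk]
  have hδrec : ∀ n j, δ n (j + 1) =
      ∑ p ∈ Finset.HasAntidiagonal.antidiagonal n, hs p.1 * δ p.2 j := by
    intro n j
    have hfac : (PowerSeries.mk r) ^ (j + 1) * ((1 - PowerSeries.X : PowerSeries ℝ)⁻¹) ^ (j + 1 + 1)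
        = (PowerSeries.mk r * (1 - PowerSeries.X)⁻¹)
          * ((PowerSeries.mk r) ^ j * ((1 - PowerSeries.X)⁻¹) ^ (j + 1)) := by
      ring
    rw [hδ n (j + 1), hfac, PowerSeries.coeff_mul]
    refine Finset.sum_congr rfl fun p _ => ?_
    rw [← hδ p.2 j, hhs_def, hinv]
  -- the weighted sequences
  set w : ℕ → ℕ → ℝ := fun j n => α ^ n * δ n j with hw_def
  have hw0 : ∀ n, w 0 n = g0 n := by
    intro n
    simp only [hw_def, hδ0, mul_one, hg0_def]
  set h2 : ℕ → ℝ := fun k => α ^ k * hs k with hh2_def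
  have hh2conv : h2 = Stmt1Aux.conv a g0 := by
    funext k
    simp only [hh2_def, hhs_def, PowerSeries.coeff_mul, PowerSeries.coeff_mk]
    rw [Stmt1Aux.conv, Finset.mul_sum]
    refine Finset.sum_congr rfl fun p hp => ?_
    have hp' : p.1 + p.2 = k := Finset.HasAntidiagonal.mem_antidiagonal.1 hp
    rw [← hp', pow_add]
    ring
  have hwrec : ∀ j n, w (j + 1) n = Stmt1Aux.conv h2 (w j) n := by
    intro j n
    simp only [hw_def, hδrec, Stmt1Aux.conv, Finset.mul_sum]
    refine Finset.sum_congr rfl fun p hp => ?_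
    have hp' : p.1 + p.2 = n := Finset.HasAntidiagonal.mem_antidiagonal.1 hp
    rw [← hp', pow_add, hh2_def]
    ring
  -- facts about h2
  have hh20 : ∀ k, 0 ≤ h2 k := by
    rw [hh2conv]; exact Stmt1Aux.conv_nonneg ha0 hg00
  have hsh2 : Summable h2 := by
    rw [hh2conv]; exact Stmt1Aux.summable_conv ha0 hg00 hsa hsg0
  have hth2 : ∑' k, h2 k = τ := by
    rw [hh2conv, Stmt1Aux.tsum_conv ha0 hg00 hsa hsg0, hρsum, htg0, hτ, div_eq_mul_inv]
  have hH : Tendsto (fun n => W n * h2 n) atTop (nhds (c * (1 - α)⁻¹)) := by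
    have := Stmt1Aux.tendsto_W_conv hμ0 ha0 hg00 hsa hsg0 hA hG0
    rw [hh2conv]
    have heq : (∑' n, a n) * 0 + (∑' n, g0 n) * c = c * (1 - α)⁻¹ := by
      rw [htg0]; ring
    rwa [heq] at this
  have hh2zero : h2 0 = 0 := by
    rw [hh2conv]
    have : Stmt1Aux.conv a g0 0 = a 0 * g0 0 := by
      rw [Stmt1Aux.conv]
      simp
    rw [this]
    simp [ha_def, hr0]
  -- the limit values
  set e : ℕ → ℝ := fun j => c * j * τ ^ (j - 1) / (1 - α) ^ 2 with he_def
  -- main induction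
  have main : ∀ j, (∀ n, 0 ≤ w j n) ∧ Summable (w j) ∧
      (∑' n, w j n = τ ^ j * (1 - α)⁻¹) ∧
      Tendsto (fun n => W n * w j n) atTop (nhds (e j)) := by
    intro j
    induction j with
    | zero =>
      refine ⟨fun n => by rw [hw0]; exact hg00 n, ?_, ?_, ?_⟩
      · exact hsg0.congr fun n => (hw0 n).symm
      · rw [tsum_congr hw0, htg0, pow_zero, one_mul]
      · have : e 0 = 0 := by simp [he_def]
        rw [this]
        exact hG0.congr fun n => by rw [hw0]
    | succ j ih =>
      obtain ⟨ihp, ihs, iht, ihl⟩ := ih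
      have hwp : ∀ n, 0 ≤ w (j+1) n := by
        intro n
        rw [hwrec]
        exact Stmt1Aux.conv_nonneg hh20 ihp n
      have hws : Summable (w (j+1)) :=
        (Stmt1Aux.summable_conv hh20 ihp hsh2 ihs).congr fun n => (hwrec j n).symm
      have hwt : ∑' n, w (j+1) n = τ ^ (j+1) * (1 - α)⁻¹ := by
        rw [tsum_congr (hwrec j), Stmt1Aux.tsum_conv hh20 ihp hsh2 ihs, hth2, iht,
          pow_succ]
        ring
      refine ⟨hwp, hws, hwt, ?_⟩
      have hlim := Stmt1Aux.tendsto_W_conv hμ0 hh20 ihp hsh2 ihs hH ihl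
      rw [hth2, iht] at hlim
      have heq : τ * e j + τ ^ j * (1 - α)⁻¹ * (c * (1 - α)⁻¹) = e (j + 1) := by
        cases j with
        | zero =>
          have h0 : e 0 = 0 := by simp [he_def]
          have h1 : e 1 = c / (1 - α) ^ 2 := by simp [he_def]
          rw [h0, h1, pow_zero]
          field_simp
          ring
        | succ m =>
          simp only [he_def, Nat.succ_sub_one]
          push_cast
          have : τ * τ ^ m = τ ^ (m + 1) := (pow_succ τ m).symm ▸ by ring
          field_simp
          ring
      rw [heq] at hlim
      exact hlim.congr fun n => by rw [hwrec]
  -- vanishing of w j n for n < j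
  have wvanish : ∀ j n, n < j → w j n = 0 := by
    intro j
    induction j with
    | zero => intro n hn; exact absurd hn (Nat.not_lt_zero n)
    | succ j ih =>
      intro n hn
      rw [hwrec, Stmt1Aux.conv]
      refine Finset.sum_eq_zero fun p hp => ?_
      have hp' : p.1 + p.2 = n := Finset.HasAntidiagonal.mem_antidiagonal.1 hp
      rcases Nat.eq_zero_or_pos p.1 with h1 | h1
      · rw [h1, hh2zero, zero_mul]
      · rw [ih p.2 (by omega), mul_zero]
  -- uniform geometric-type bounds
  set β : ℝ := τ ^ ((2 * μ)⁻¹ : ℝ) with hβ_def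
  have hβ0 : 0 < β := Real.rpow_pos_of_pos hτ0 _
  have hβ1 : β < 1 := Real.rpow_lt_one hτ0.le hτ1 (by positivity)
  set ε : ℝ := 1 - β with hε_def
  have hε0 : 0 < ε := by rw [hε_def]; linarith
  have hε1 : ε < 1 := by rw [hε_def]; linarith
  set τ' : ℝ := τ ^ ((2:ℝ))⁻¹ with hτ'_def
  have hτ'0 : 0 < τ' := Real.rpow_pos_of_pos hτ0 _
  have hτ'1 : τ' < 1 := Real.rpow_lt_one hτ0.le hτ1 (by norm_num)
  have hττ' : τ ≤ τ' := by
    have := Real.rpow_le_rpow_of_exponent_ge hτ0 hτ1.le (by norm_num : (2:ℝ)⁻¹ ≤ 1)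
    rwa [Real.rpow_one] at this
  have hτ'sq : τ' * τ' = τ := by
    rw [hτ'_def, ← Real.rpow_add hτ0]
    norm_num
  have hβμ : ((1 - ε)⁻¹) ^ μ * τ = τ' := by
    have h1 : (1 - ε) = β := by rw [hε_def]; ring
    have h2 : (β⁻¹) ^ μ = (β ^ μ)⁻¹ := Real.inv_rpow hβ0.le μ
    have h3 : β ^ μ = τ' := by
      rw [hβ_def, ← Real.rpow_mul hτ0.le, hτ'_def]
      congr 1
      field_simp
    rw [h1, h2, h3]
    rw [inv_mul_eq_div, ← hτ'sq]
    field_simp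
  obtain ⟨Q, hQ'⟩ := hH.bddAbove_range
  have hQ : ∀ n, W n * h2 n ≤ Q := fun n => hQ' (Set.mem_range_self n)
  have hQ0 : 0 ≤ Q := le_trans (mul_nonneg (hWpos 0).le (hh20 0)) (hQ 0)
  obtain ⟨N0, hN0'⟩ := (main 0).2.2.2.bddAbove_range
  have hN0 : ∀ n, W n * w 0 n ≤ N0 := fun n => hN0' (Set.mem_range_self n)
  have hN00 : 0 ≤ N0 := le_trans (mul_nonneg (hWpos 0).le ((main 0).1 0)) (hN0 0)
  set K : ℝ := (ε⁻¹) ^ μ * (Q * (1 - α)⁻¹) with hK_def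
  have hK0 : 0 ≤ K :=
    mul_nonneg (Real.rpow_nonneg (by positivity) _) (mul_nonneg hQ0 (inv_nonneg.2 h1α.le))
  set K' : ℝ := K / τ' with hK'_def
  have hK'0 : 0 ≤ K' := div_nonneg hK0 hτ'0.le
  have Bnd : ∀ j n, W n * w j n ≤ (N0 + j * K') * τ' ^ j := by
    intro j
    induction j with
    | zero => intro n; simpa using hN0 n
    | succ j ih =>
      intro n
      rw [hwrec]
      have hb := Stmt1Aux.conv_W_bound hμ0 hε0 hε1 hh20 (main j).1 hsh2 (main j).2.1
        hQ ih (le_of_eq (main j).2.2.1) n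
      rw [hth2] at hb
      refine le_trans hb ?_
      have e1 : ((1 - ε)⁻¹) ^ μ * (τ * ((N0 + j * K') * τ' ^ j))
          = τ' * ((N0 + j * K') * τ' ^ j) := by rw [← hβμ]; ring
      have e2 : (ε⁻¹) ^ μ * (Q * (τ ^ j * (1 - α)⁻¹)) = K * τ ^ j := by
        rw [hK_def]; ring
      rw [e1, e2]
      have e3 : K * τ ^ j ≤ K * τ' ^ j :=
        mul_le_mul_of_nonneg_left (pow_le_pow_left₀ hτ0.le hττ' j) hK0
      have e4 : K * τ' ^ j = K' * τ' ^ (j + 1) := by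
        rw [hK'_def, pow_succ]
        field_simp
      calc τ' * ((N0 + ↑j * K') * τ' ^ j) + K * τ ^ j
          ≤ τ' * ((N0 + ↑j * K') * τ' ^ j) + K' * τ' ^ (j + 1) := by
            rw [← e4]; linarith [e3]
        _ = (N0 + (↑(j + 1) : ℝ) * K') * τ' ^ (j + 1) := by
            push_cast
            rw [pow_succ]
            ring
  -- the total sum
  have hvan : ∀ n, α ^ n * δtot n = ∑' j, w j n := by
    intro n
    rw [hδtot, Finset.mul_sum]
    exact (tsum_eq_sum (s := Finset.range (n + 1)) fun j hj =>
      wvanish j n (by simpa using hj)).symm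
  have hbound_sum : Summable (fun j : ℕ => (N0 + j * K') * τ' ^ j) := by
    have s1 : Summable (fun j : ℕ => N0 * τ' ^ j) :=
      (summable_geometric_of_lt_one hτ'0.le hτ'1).mul_left N0
    have s2 : Summable (fun j : ℕ => (j : ℝ) * τ' ^ j) := by
      have := summable_pow_mul_geometric_of_norm_lt_one 1 (r := τ')
        (by rw [Real.norm_eq_abs, abs_of_nonneg hτ'0.le]; exact hτ'1)
      exact this.congr fun j => by rw [pow_one]
    exact (s1.add (s2.mul_left K')).congr fun j => by ring
  have hden : Tendsto (fun n => W n * (α ^ n * δtot n)) atTop (nhds (∑' j, e j)) := by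
    have key := tendsto_tsum_of_dominated_convergence (𝓕 := (atTop : Filter ℕ))
      (f := fun n j => W n * w j n) (g := e) (bound := fun j => (N0 + j * K') * τ' ^ j)
      hbound_sum (fun j => (main j).2.2.2) ?_
    · refine key.congr fun n => ?_
      rw [tsum_mul_left, hvan]
    · refine Eventually.of_forall fun n j => ?_
      rw [Real.norm_of_nonneg (mul_nonneg (hWpos n).le ((main j).1 n))]
      exact Bnd j n
  -- value of the total limit
  have hse : Summable e :=
    hbound_sum.of_nonneg_of_le
      (fun j => div_nonneg
        (mul_nonneg (mul_nonneg hc.le (Nat.cast_nonneg j)) (pow_nonneg hτ0.le _))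
        (by positivity))
      (fun j => le_of_tendsto ((main j).2.2.2) (Eventually.of_forall fun n => Bnd j n))
  have h1τ : (0:ℝ) < 1 - τ := by linarith
  have hτnorm : ‖τ‖ < 1 := by rw [Real.norm_eq_abs, abs_of_nonneg hτ0.le]; exact hτ1
  have sτ1 : Summable (fun j : ℕ => (j : ℝ) * τ ^ j) := by
    have := summable_pow_mul_geometric_of_norm_lt_one 1 (r := τ) hτnorm
    exact this.congr fun j => by rw [pow_one]
  have sτ2 : Summable (fun j : ℕ => τ ^ j) := summable_geometric_of_lt_one hτ0.le hτ1
  have hEval : ∑' j, e j = c / ((1 - α) ^ 2 * (1 - τ) ^ 2) := by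
    rw [Summable.tsum_eq_zero_add hse]
    have he0 : e 0 = 0 := by simp [he_def]
    have heq : ∀ j : ℕ, e (j + 1) =
        c / (1 - α) ^ 2 * ((j : ℝ) * τ ^ j) + c / (1 - α) ^ 2 * τ ^ j := by
      intro j
      simp only [he_def, Nat.succ_sub_one]
      push_cast
      ring
    rw [he0, zero_add, tsum_congr heq,
      Summable.tsum_add (sτ1.mul_left _) (sτ2.mul_left _), tsum_mul_left, tsum_mul_left,
      tsum_coe_mul_geometric_of_norm_lt_one hτnorm, tsum_geometric_of_lt_one hτ0.le hτ1]
    field_simp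
    ring
  have hEne : (∑' j, e j) ≠ 0 := by
    rw [hEval]
    exact ne_of_gt (div_pos hc (by positivity))
  -- conclusion
  intro i hi
  obtain ⟨m, rfl⟩ : ∃ m, i = m + 1 := ⟨i - 1, by omega⟩
  have hnum := (main (m + 1)).2.2.2
  have hdiv := hnum.div hden hEne
  have hfrac : ∀ n, (W n * w (m + 1) n) / (W n * (α ^ n * δtot n))
      = δ n (m + 1) / δtot n := by
    intro n
    have hx : W n * α ^ n ≠ 0 := by
      have := hWpos n
      positivity
    have h1 : W n * w (m + 1) n = (W n * α ^ n) * δ n (m + 1) := by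
      simp only [hw_def]; ring
    have h2 : W n * (α ^ n * δtot n) = (W n * α ^ n) * δtot n := by ring
    rw [h1, h2, mul_div_mul_left _ _ hx]
  have hdiv' := hdiv.congr hfrac
  have hval : e (m + 1) / (∑' j, e j) = (1 - τ) ^ 2 / τ * (↑(m + 1)) * τ ^ (m + 1) := by
    rw [hEval]
    simp only [he_def, Nat.succ_sub_one]
    push_cast
    rw [pow_succ]
    have hτne : τ ≠ 0 := hτ0.ne'
    have h1τne : (1:ℝ) - τ ≠ 0 := h1τ.ne'
    have h1αne : (1:ℝ) - α ≠ 0 := h1α.ne'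
    have hcne : c ≠ 0 := hc.ne'
    field_simp
    ring
  rwa [hval] at hdiv'
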